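/- Let P and Q be real Banach spaces, let a : P → P be a continuous linear automorphism with continuous inverse a⁻¹, and let b : Q → P, c : P → Q, d : Q → Q be continuous linear maps. Let δ > 0 satisfy ‖a⁻¹‖·‖b‖·δ < 1 and (‖c‖ + ‖d‖·δ)·‖a⁻¹‖ / (1 − ‖a⁻¹‖·‖b‖·δ) ≤ δ. For a continuous linear map T : P → Q with ‖T‖ ≤ δ set Λ(T) := (c + d∘T) ∘ (a + b∘T)⁻¹. Then for all continuous linear maps T, S : P → Q with ‖T‖ ≤ δ and ‖S‖ ≤ δ one has ‖Λ(T) − Λ(S)‖ ≤ (δ·‖b‖ + ‖d‖) · (‖a⁻¹‖ / (1 − ‖a⁻¹‖·‖b‖·δ)) · ‖T − S‖. In particular, if (δ·‖b‖ + ‖d‖)·‖a⁻¹‖ / (1 − ‖a⁻¹‖·‖b‖·δ) < 1, then Λ is a contraction on the set of continuous linear maps T : P → Q with ‖T‖ ≤ δ. -/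
import Mathlib


/-- Under the smallness assumptions `‖a⁻¹‖·‖b‖·δ < 1` and
`(‖c‖ + ‖d‖·δ)·‖a⁻¹‖/(1 − ‖a⁻¹‖·‖b‖·δ) ≤ δ`, the graph-transform derivative operator
`Λ(T) = (c + d∘T)∘(a + b∘T)⁻¹` is well defined on the `δ`-ball of linear maps `T : P → Q`
and satisfies the Lipschitz estimate
`‖Λ(T) − Λ(S)‖ ≤ (δ‖b‖ + ‖d‖)·(‖a⁻¹‖/(1 − ‖a⁻¹‖·‖b‖·δ))·‖T − S‖`. -/
theorem graph_transform_derivative_contraction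
    {P Q : Type*} [NormedAddCommGroup P] [NormedSpace ℝ P] [CompleteSpace P]
    [NormedAddCommGroup Q] [NormedSpace ℝ Q] [CompleteSpace Q]
    (a : P ≃L[ℝ] P) (b : Q →L[ℝ] P) (c : P →L[ℝ] Q) (d : Q →L[ℝ] Q)
    (δ : ℝ) (hδ : 0 < δ)
    (hsmall : ‖(a.symm : P →L[ℝ] P)‖ * ‖b‖ * δ < 1)
    (hself : (‖c‖ + ‖d‖ * δ) * ‖(a.symm : P →L[ℝ] P)‖ /
        (1 - ‖(a.symm : P →L[ℝ] P)‖ * ‖b‖ * δ) ≤ δ) :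
    (∀ T : P →L[ℝ] Q, ‖T‖ ≤ δ →
      ∃ e : P ≃L[ℝ] P, (e : P →L[ℝ] P) = (a : P →L[ℝ] P) + b.comp T) ∧
    (∀ (T S : P →L[ℝ] Q), ‖T‖ ≤ δ → ‖S‖ ≤ δ →
      ∀ (eT eS : P ≃L[ℝ] P),
        (eT : P →L[ℝ] P) = (a : P →L[ℝ] P) + b.comp T →
        (eS : P →L[ℝ] P) = (a : P →L[ℝ] P) + b.comp S →
        ‖(c + d.comp T).comp (eT.symm : P →L[ℝ] P) -
            (c + d.comp S).comp (eS.symm : P →L[ℝ] P)‖ ≤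
          (δ * ‖b‖ + ‖d‖) *
            (‖(a.symm : P →L[ℝ] P)‖ / (1 - ‖(a.symm : P →L[ℝ] P)‖ * ‖b‖ * δ)) *
            ‖T - S‖) := by
  set A : P →L[ℝ] P := (a.symm : P →L[ℝ] P) with hA
  set k : ℝ := ‖A‖ * ‖b‖ * δ with hk
  have hk0 : 0 ≤ k := by positivity
  have hk1 : 0 < 1 - k := by linarith
  have hAnn : (0:ℝ) ≤ ‖A‖ := norm_nonneg _
  -- norm bound on composition a⁻¹ ∘ b ∘ T
  have hcomp : ∀ T : P →L[ℝ] Q, ‖T‖ ≤ δ → ‖A.comp (b.comp T)‖ ≤ k := by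
    intro T hT
    calc ‖A.comp (b.comp T)‖ ≤ ‖A‖ * ‖b.comp T‖ := ContinuousLinearMap.opNorm_comp_le _ _
      _ ≤ ‖A‖ * (‖b‖ * ‖T‖) :=
        mul_le_mul_of_nonneg_left (ContinuousLinearMap.opNorm_comp_le _ _) hAnn
      _ ≤ ‖A‖ * (‖b‖ * δ) := by
        have := mul_le_mul_of_nonneg_left hT (norm_nonneg b)
        exact mul_le_mul_of_nonneg_left this hAnn
      _ = k := by rw [hk]; ring
  -- existence part
  have exist : ∀ T : P →L[ℝ] Q, ‖T‖ ≤ δ →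
      ∃ e : P ≃L[ℝ] P, (e : P →L[ℝ] P) = (a : P →L[ℝ] P) + b.comp T := by
    intro T hT
    have hlt : ‖-(A.comp (b.comp T))‖ < 1 := by
      rw [norm_neg]; exact lt_of_le_of_lt (hcomp T hT) hsmall
    let u : (P →L[ℝ] P)ˣ := Units.oneSub _ hlt
    refine ⟨(ContinuousLinearEquiv.unitsEquiv ℝ P u).trans a, ?_⟩
    ext x
    have hu : (u : P →L[ℝ] P) = 1 - (-(A.comp (b.comp T))) := rfl
    simp only [ContinuousLinearEquiv.coe_coe, ContinuousLinearEquiv.trans_apply,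
      ContinuousLinearEquiv.unitsEquiv_apply, hu, ContinuousLinearMap.add_apply,
      ContinuousLinearMap.coe_comp', Function.comp_apply, ContinuousLinearMap.sub_apply,
      ContinuousLinearMap.neg_apply, ContinuousLinearMap.one_apply, sub_neg_eq_add, map_add]
    simp [A]
  refine ⟨exist, ?_⟩
  -- bound on inverse
  have hinv : ∀ (T : P →L[ℝ] Q), ‖T‖ ≤ δ → ∀ e : P ≃L[ℝ] P,
      (e : P →L[ℝ] P) = (a : P →L[ℝ] P) + b.comp T →
      ‖(e.symm : P →L[ℝ] P)‖ ≤ ‖A‖ / (1 - k) := by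
    intro T hT e he
    refine ContinuousLinearMap.opNorm_le_bound _ (by positivity) (fun y => ?_)
    set x := e.symm y with hx
    have hex : e x = y := e.apply_symm_apply y
    have hax : (a : P →L[ℝ] P) x = y - b (T x) := by
      have := congrArg (fun f : P →L[ℝ] P => f x) he
      simp only [ContinuousLinearMap.add_apply, ContinuousLinearMap.coe_comp',
        Function.comp_apply] at this
      rw [ContinuousLinearEquiv.coe_coe] at this
      rw [hex] at this
      rw [this]; abel
    have hxeq : x = A (y - b (T x)) := by
      rw [← hax]
      simp [A]
    have hxb : ‖x‖ ≤ ‖A‖ * ‖y‖ + k * ‖x‖ := by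
      calc ‖x‖ = ‖A (y - b (T x))‖ := by rw [← hxeq]
        _ ≤ ‖A‖ * ‖y - b (T x)‖ := A.le_opNorm _
        _ ≤ ‖A‖ * (‖y‖ + ‖b (T x)‖) :=
          mul_le_mul_of_nonneg_left (norm_sub_le _ _) hAnn
        _ ≤ ‖A‖ * (‖y‖ + ‖b‖ * (‖T‖ * ‖x‖)) := by
          have h1 : ‖b (T x)‖ ≤ ‖b‖ * ‖T x‖ := b.le_opNorm _
          have h2 : ‖T x‖ ≤ ‖T‖ * ‖x‖ := T.le_opNorm _
          have := h1.trans (mul_le_mul_of_nonneg_left h2 (norm_nonneg b))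
          gcongr
        _ ≤ ‖A‖ * (‖y‖ + ‖b‖ * (δ * ‖x‖)) := by
          have : ‖T‖ * ‖x‖ ≤ δ * ‖x‖ := mul_le_mul_of_nonneg_right hT (norm_nonneg _)
          gcongr
        _ = ‖A‖ * ‖y‖ + k * ‖x‖ := by rw [hk]; ring
    have : (1 - k) * ‖x‖ ≤ ‖A‖ * ‖y‖ := by nlinarith [norm_nonneg x]
    have hxx : ‖(e.symm : P →L[ℝ] P) y‖ = ‖x‖ := rfl
    rw [div_mul_eq_mul_div, le_div_iff₀ hk1, hxx]
    linarith
  -- bound on Λ(T)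
  have hΛ : ∀ (T : P →L[ℝ] Q), ‖T‖ ≤ δ → ∀ e : P ≃L[ℝ] P,
      (e : P →L[ℝ] P) = (a : P →L[ℝ] P) + b.comp T →
      ‖(c + d.comp T).comp (e.symm : P →L[ℝ] P)‖ ≤ δ := by
    intro T hT e he
    have h1 : ‖c + d.comp T‖ ≤ ‖c‖ + ‖d‖ * δ := by
      calc ‖c + d.comp T‖ ≤ ‖c‖ + ‖d.comp T‖ := norm_add_le _ _
        _ ≤ ‖c‖ + ‖d‖ * ‖T‖ := by gcongr; exact ContinuousLinearMap.opNorm_comp_le _ _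
        _ ≤ ‖c‖ + ‖d‖ * δ := by gcongr
    have h2 := hinv T hT e he
    calc ‖(c + d.comp T).comp (e.symm : P →L[ℝ] P)‖
        ≤ ‖c + d.comp T‖ * ‖(e.symm : P →L[ℝ] P)‖ := ContinuousLinearMap.opNorm_comp_le _ _
      _ ≤ (‖c‖ + ‖d‖ * δ) * (‖A‖ / (1 - k)) := by
          have hc0 : (0:ℝ) ≤ ‖c‖ + ‖d‖ * δ := by positivity
          exact mul_le_mul h1 h2 (norm_nonneg _) hc0
      _ ≤ δ := by rw [mul_div_assoc] at hself; exact hself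
  intro T S hT hS eT eS heT heS
  set ΛT := (c + d.comp T).comp (eT.symm : P →L[ℝ] P) with hΛT
  set ΛS := (c + d.comp S).comp (eS.symm : P →L[ℝ] P) with hΛS
  set M := (ΛT.comp b).comp (S - T) + d.comp (T - S) with hM
  -- key identity
  have hid : ΛT - ΛS = M.comp (eS.symm : P →L[ℝ] P) := by
    have h1 : (ΛT - ΛS).comp (eS : P →L[ℝ] P) = M := by
      ext x
      have hSx : eS x = a x + b (S x) := by
        have := congrArg (fun f : P →L[ℝ] P => f x) heS
        simpa using this
      have hTx : eT x = a x + b (T x) := by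
        have := congrArg (fun f : P →L[ℝ] P => f x) heT
        simpa using this
      have hdiff : eS x = eT x + b (S x - T x) := by
        rw [hSx, hTx, map_sub]; abel
      have hsymm : eT.symm (eS x) = x + eT.symm (b (S x - T x)) := by
        conv_lhs => rw [show eS x = eT (x + eT.symm (b (S x - T x))) by
          rw [map_add, eT.apply_symm_apply]; exact hdiff]
        rw [eT.symm_apply_apply]
      simp only [hM, hΛT, hΛS, ContinuousLinearMap.comp_apply, ContinuousLinearMap.sub_apply,
        ContinuousLinearMap.add_apply, ContinuousLinearEquiv.coe_coe]
      rw [eS.symm_apply_apply, hsymm]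
      simp only [map_add, map_sub, ContinuousLinearMap.add_apply, ContinuousLinearMap.sub_apply,
        ContinuousLinearMap.comp_apply, ContinuousLinearMap.coe_comp', Function.comp_apply]
      abel
    calc ΛT - ΛS = ((ΛT - ΛS).comp (eS : P →L[ℝ] P)).comp (eS.symm : P →L[ℝ] P) := by
          ext x
          simp [ContinuousLinearMap.comp_apply, eS.apply_symm_apply]
      _ = M.comp (eS.symm : P →L[ℝ] P) := by rw [h1]
  have hMnorm : ‖M‖ ≤ (δ * ‖b‖ + ‖d‖) * ‖T - S‖ := by
    have h1 : ‖(ΛT.comp b).comp (S - T)‖ ≤ δ * ‖b‖ * ‖T - S‖ := by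
      calc ‖(ΛT.comp b).comp (S - T)‖ ≤ ‖ΛT.comp b‖ * ‖S - T‖ :=
            ContinuousLinearMap.opNorm_comp_le _ _
        _ ≤ ‖ΛT‖ * ‖b‖ * ‖S - T‖ := by
            gcongr; exact ContinuousLinearMap.opNorm_comp_le _ _
        _ ≤ δ * ‖b‖ * ‖S - T‖ := by
            have := hΛ T hT eT heT
            gcongr
        _ = δ * ‖b‖ * ‖T - S‖ := by rw [norm_sub_rev]
    have h2 : ‖d.comp (T - S)‖ ≤ ‖d‖ * ‖T - S‖ := ContinuousLinearMap.opNorm_comp_le _ _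
    calc ‖M‖ ≤ ‖(ΛT.comp b).comp (S - T)‖ + ‖d.comp (T - S)‖ := norm_add_le _ _
      _ ≤ δ * ‖b‖ * ‖T - S‖ + ‖d‖ * ‖T - S‖ := add_le_add h1 h2
      _ = (δ * ‖b‖ + ‖d‖) * ‖T - S‖ := by ring
  have hES := hinv S hS eS heS
  calc ‖ΛT - ΛS‖ = ‖M.comp (eS.symm : P →L[ℝ] P)‖ := by rw [hid]
    _ ≤ ‖M‖ * ‖(eS.symm : P →L[ℝ] P)‖ := ContinuousLinearMap.opNorm_comp_le _ _
    _ ≤ ((δ * ‖b‖ + ‖d‖) * ‖T - S‖) * (‖A‖ / (1 - k)) := by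
        have hM0 : (0:ℝ) ≤ (δ * ‖b‖ + ‖d‖) * ‖T - S‖ := by positivity
        exact mul_le_mul hMnorm hES (norm_nonneg _) hM0
    _ = (δ * ‖b‖ + ‖d‖) * (‖A‖ / (1 - k)) * ‖T - S‖ := by ring
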